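/- (Corollary 2: sufficient conditions for welfare-monotonicity.) In the binary monopoly model with D_L and D_H three times continuously differentiable, fix α ∈ (0,1]. If the optimal-price function μ ↦ p(μ) is convex on [0,1] and for every p ∈ (p_L*, p_H*) one has (V_L^α)''(p) ≤ 0, (V_H^α)''(p) ≤ 0 and (V_H^α)'(p) ≤ (V_L^α)'(p), then W^α is concave on [0,1]. Symmetrically, if μ ↦ p(μ) is concave on [0,1] and for every p ∈ (p_L*, p_H*) one has (V_L^α)''(p) ≥ 0, (V_H^α)''(p) ≥ 0 and (V_H^α)'(p) ≥ (V_L^α)'(p), then W^α is convex on [0,1]. -/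

import Mathlib

section AuxStmt5

private lemma tangent_of_antitone_stmt5 {f : ℝ → ℝ} {c d : ℝ}
    (hder : ∀ t ∈ Set.Icc c d, HasDerivAt f (deriv f t) t)
    (hanti : AntitoneOn (deriv f) (Set.Icc c d)) :
    ∀ x ∈ Set.Icc c d, ∀ y ∈ Set.Icc c d, f x ≤ f y + deriv f y * (x - y) := by
  intro x hx y hy
  rcases lt_trichotomy x y with h | h | h
  · obtain ⟨z, hz, hz'⟩ := exists_hasDerivAt_eq_slope f (deriv f) h
      (fun t ht => ((hder t (Set.Icc_subset_Icc hx.1 hy.2 ht)).continuousAt).continuousWithinAt)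
      (fun t ht => hder t (Set.Icc_subset_Icc hx.1 hy.2 (Set.Ioo_subset_Icc_self ht)))
    have hzm : z ∈ Set.Icc c d := Set.Icc_subset_Icc hx.1 hy.2 (Set.Ioo_subset_Icc_self hz)
    have h1 : deriv f y ≤ deriv f z := hanti hzm hy hz.2.le
    have h2 : f y - f x = deriv f z * (y - x) := by
      rw [eq_div_iff (sub_ne_zero.2 h.ne')] at hz'; linarith
    nlinarith [h1, h2, sub_pos.2 h]
  · subst h; simp
  · obtain ⟨z, hz, hz'⟩ := exists_hasDerivAt_eq_slope f (deriv f) h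
      (fun t ht => ((hder t (Set.Icc_subset_Icc hy.1 hx.2 ht)).continuousAt).continuousWithinAt)
      (fun t ht => hder t (Set.Icc_subset_Icc hy.1 hx.2 (Set.Ioo_subset_Icc_self ht)))
    have hzm : z ∈ Set.Icc c d := Set.Icc_subset_Icc hy.1 hx.2 (Set.Ioo_subset_Icc_self hz)
    have h1 : deriv f z ≤ deriv f y := hanti hy hzm hz.1.le
    have h2 : f x - f y = deriv f z * (x - y) := by
      rw [eq_div_iff (sub_ne_zero.2 h.ne')] at hz'; linarith
    nlinarith [h1, h2, sub_pos.2 h]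

private lemma tangent_package_stmt5 {V g : ℝ → ℝ} {I : Set ℝ} {c d : ℝ} (hIopen : IsOpen I)
    (hsub : Set.Icc c d ⊆ I)
    (hder : ∀ q ∈ I, HasDerivAt V (g q) q)
    (hgc : ContinuousOn g I) (hgd : DifferentiableOn ℝ g I)
    (h2 : ∀ q ∈ Set.Ioo c d, deriv (deriv V) q ≤ 0) :
    (∀ x ∈ Set.Icc c d, ∀ y ∈ Set.Icc c d, V x ≤ V y + deriv V y * (x - y)) ∧
    ContinuousOn (deriv V) (Set.Icc c d) := by
  have hEq : Set.EqOn (deriv V) g I := fun q hq => (hder q hq).deriv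
  have hcont : ContinuousOn (deriv V) (Set.Icc c d) := (hgc.congr hEq).mono hsub
  have hdiff : ∀ q ∈ Set.Ioo c d, DifferentiableAt ℝ (deriv V) q := by
    intro q hq
    have hqI : q ∈ I := hsub (Set.Ioo_subset_Icc_self hq)
    have hev : deriv V =ᶠ[nhds q] g := Filter.eventuallyEq_of_mem (hIopen.mem_nhds hqI) hEq
    exact hev.differentiableAt_iff.2 ((hgd q hqI).differentiableAt (hIopen.mem_nhds hqI))
  have hanti : AntitoneOn (deriv V) (Set.Icc c d) :=
    antitoneOn_of_deriv_nonpos (convex_Icc c d) hcont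
      (by rw [interior_Icc]; exact fun q hq => (hdiff q hq).differentiableWithinAt)
      (by rw [interior_Icc]; exact h2)
  refine ⟨tangent_of_antitone_stmt5 (fun t ht => ?_) hanti, hcont⟩
  rw [show deriv V t = g t from hEq (hsub ht)]
  exact hder t (hsub ht)

private lemma concave_aux_stmt5 {pLs pHs : ℝ} {VL VH p : ℝ → ℝ}
    (hmem : ∀ μ ∈ Set.Icc (0:ℝ) 1, p μ ∈ Set.Icc pLs pHs)
    (htL : ∀ x ∈ Set.Icc pLs pHs, ∀ y ∈ Set.Icc pLs pHs, VL x ≤ VL y + deriv VL y * (x - y))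
    (htH : ∀ x ∈ Set.Icc pLs pHs, ∀ y ∈ Set.Icc pLs pHs, VH x ≤ VH y + deriv VH y * (x - y))
    (hA : ∀ x ∈ Set.Icc (0:ℝ) 1, ∀ y ∈ Set.Icc (0:ℝ) 1, ∀ a b : ℝ, 0 ≤ a → 0 ≤ b → a + b = 1 →
      ((1 - (a*x+b*y)) * deriv VL (p (a*x+b*y)) + (a*x+b*y) * deriv VH (p (a*x+b*y)))
        * (a * p x + b * p y - p (a*x+b*y)) ≤ 0)
    (hB : ∀ μ ∈ Set.Icc (0:ℝ) 1, ∀ x ∈ Set.Icc (0:ℝ) 1, ∀ y ∈ Set.Icc (0:ℝ) 1,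
      (x - y) * (p x - p y) * (deriv VH (p μ) - deriv VL (p μ)) ≤ 0) :
    ConcaveOn ℝ (Set.Icc (0:ℝ) 1) (fun μ => (1-μ) * VL (p μ) + μ * VH (p μ)) := by
  refine ⟨convex_Icc 0 1, fun x hx y hy a b ha hb hab => ?_⟩
  simp only [smul_eq_mul]
  set μ := a * x + b * y with hμdef
  have hμ : μ ∈ Set.Icc (0:ℝ) 1 := by
    constructor
    · nlinarith [hx.1, hy.1]
    · nlinarith [hx.2, hy.2]
  set q := p μ
  set q1 := p x
  set q2 := p y
  set L := deriv VL q with hL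
  set H := deriv VH q with hH
  have hq : q ∈ Set.Icc pLs pHs := hmem μ hμ
  have hq1 : q1 ∈ Set.Icc pLs pHs := hmem x hx
  have hq2 : q2 ∈ Set.Icc pLs pHs := hmem y hy
  have t1 : VL q1 ≤ VL q + L * (q1 - q) := htL q1 hq1 q hq
  have t2 : VH q1 ≤ VH q + H * (q1 - q) := htH q1 hq1 q hq
  have t3 : VL q2 ≤ VL q + L * (q2 - q) := htL q2 hq2 q hq
  have t4 : VH q2 ≤ VH q + H * (q2 - q) := htH q2 hq2 q hq
  have sA : ((1 - μ) * L + μ * H) * (a * q1 + b * q2 - q) ≤ 0 := hA x hx y hy a b ha hb hab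
  have sB : (x - y) * (q1 - q2) * (H - L) ≤ 0 := hB μ hμ x hx y hy
  have sB' : (a * b) * ((x - y) * (q1 - q2) * (H - L)) ≤ 0 :=
    mul_nonpos_of_nonneg_of_nonpos (mul_nonneg ha hb) sB
  have c1 : 0 ≤ a * (1 - x) := mul_nonneg ha (by linarith [hx.2])
  have c2 : 0 ≤ a * x := mul_nonneg ha hx.1
  have c3 : 0 ≤ b * (1 - y) := mul_nonneg hb (by linarith [hy.2])
  have c4 : 0 ≤ b * y := mul_nonneg hb hy.1
  have e1 := mul_le_mul_of_nonneg_left t1 c1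
  have e2 := mul_le_mul_of_nonneg_left t2 c2
  have e3 := mul_le_mul_of_nonneg_left t3 c3
  have e4 := mul_le_mul_of_nonneg_left t4 c4
  have hid : a * (1 - x) * (VL q + L * (q1 - q)) + a * x * (VH q + H * (q1 - q))
      + b * (1 - y) * (VL q + L * (q2 - q)) + b * y * (VH q + H * (q2 - q))
      = ((1 - μ) * VL q + μ * VH q)
        + ((1 - μ) * L + μ * H) * (a * q1 + b * q2 - q)
        + (a * b) * ((x - y) * (q1 - q2) * (H - L)) := by
    have hb' : b = 1 - a := by linarith
    subst hb'
    simp only [hμdef]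
    ring
  have hlhs : a * ((1 - x) * VL q1 + x * VH q1) + b * ((1 - y) * VL q2 + y * VH q2)
      = a * (1 - x) * VL q1 + a * x * VH q1 + b * (1 - y) * VL q2 + b * y * VH q2 := by ring
  rw [hlhs]
  linarith [e1, e2, e3, e4, sA, sB', hid.le, hid.ge]

private lemma convcomb_pos_stmt5 {t A B : ℝ} (ht0 : 0 ≤ t) (ht1 : t ≤ 1) (hA : 0 < A)
    (hB : 0 < B) : 0 < (1-t)*A + t*B := by
  nlinarith [mul_nonneg ht0 hB.le, mul_nonneg (sub_nonneg.2 ht1) hA.le]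

end AuxStmt5

theorem stmt_5
    (I : Set ℝ) (DL DH RL RH : ℝ → ℝ) (pLs pHs : ℝ)
    (hIopen : IsOpen I) (hIconv : Convex ℝ I) (hIpos : I ⊆ Set.Ioi (0:ℝ))
    (hRL : RL = fun q => q * DL q) (hRH : RH = fun q => q * DH q)
    (hDL : ContDiffOn ℝ 3 DL I) (hDH : ContDiffOn ℝ 3 DH I)
    (hDLpos : ∀ q ∈ I, 0 < DL q) (hDHpos : ∀ q ∈ I, 0 < DH q)
    (hDL' : ∀ q ∈ I, deriv DL q < 0) (hDH' : ∀ q ∈ I, deriv DH q < 0)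
    (hRL'' : ∀ q ∈ I, deriv (deriv RL) q < 0) (hRH'' : ∀ q ∈ I, deriv (deriv RH) q < 0)
    (hpLs : pLs ∈ I) (hpHs : pHs ∈ I) (hlt : pLs < pHs)
    (hRL' : deriv RL pLs = 0) (hRH' : deriv RH pHs = 0)
    (p : ℝ → ℝ)
    (hp : ∀ μ ∈ Set.Icc (0:ℝ) 1, p μ ∈ Set.Icc pLs pHs ∧
      (1 - μ) * deriv RL (p μ) + μ * deriv RH (p μ) = 0)
    (α : ℝ) (hα : α ∈ Set.Ioc (0:ℝ) 1)
    (CSL CSH VL VH : ℝ → ℝ)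
    (hCSL : ∀ q ∈ I, HasDerivAt CSL (-(DL q)) q)
    (hCSH : ∀ q ∈ I, HasDerivAt CSH (-(DH q)) q)
    (hVL : VL = fun q => α * CSL q + (1 - α) * RL q)
    (hVH : VH = fun q => α * CSH q + (1 - α) * RH q)
    (W : ℝ → ℝ)
    (hW : W = fun μ => (1 - μ) * VL (p μ) + μ * VH (p μ)) :
    (ConvexOn ℝ (Set.Icc (0:ℝ) 1) p →
      (∀ q ∈ Set.Ioo pLs pHs,
        deriv (deriv VL) q ≤ 0 ∧ deriv (deriv VH) q ≤ 0 ∧ deriv VH q ≤ deriv VL q) →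
      ConcaveOn ℝ (Set.Icc (0:ℝ) 1) W) ∧
    (ConcaveOn ℝ (Set.Icc (0:ℝ) 1) p →
      (∀ q ∈ Set.Ioo pLs pHs,
        0 ≤ deriv (deriv VL) q ∧ 0 ≤ deriv (deriv VH) q ∧ deriv VL q ≤ deriv VH q) →
      ConvexOn ℝ (Set.Icc (0:ℝ) 1) W) := by
  obtain ⟨hα0, hα1⟩ := hα
  have Isub : Set.Icc pLs pHs ⊆ I := fun q hq => hIconv.ordConnected.out hpLs hpHs hq
  -- smoothness of revenue functions
  have hRLC : ContDiffOn ℝ 3 RL I := by rw [hRL]; exact contDiffOn_id.mul hDL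
  have hRHC : ContDiffOn ℝ 3 RH I := by rw [hRH]; exact contDiffOn_id.mul hDH
  have hRL1 : ContDiffOn ℝ 2 (deriv RL) I := hRLC.deriv_of_isOpen hIopen (by norm_num)
  have hRH1 : ContDiffOn ℝ 2 (deriv RH) I := hRHC.deriv_of_isOpen hIopen (by norm_num)
  have hRLdA : ∀ q ∈ I, DifferentiableAt ℝ RL q := fun q hq =>
    (hRLC.differentiableOn (by norm_num)).differentiableAt (hIopen.mem_nhds hq)
  have hRHdA : ∀ q ∈ I, DifferentiableAt ℝ RH q := fun q hq =>
    (hRHC.differentiableOn (by norm_num)).differentiableAt (hIopen.mem_nhds hq)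
  have hRL1dA : ∀ q ∈ I, DifferentiableAt ℝ (deriv RL) q := fun q hq =>
    (hRL1.differentiableOn (by norm_num)).differentiableAt (hIopen.mem_nhds hq)
  have hRH1dA : ∀ q ∈ I, DifferentiableAt ℝ (deriv RH) q := fun q hq =>
    (hRH1.differentiableOn (by norm_num)).differentiableAt (hIopen.mem_nhds hq)
  -- derivatives of V
  have hVLder : ∀ q ∈ I, HasDerivAt VL (α * -(DL q) + (1-α) * deriv RL q) q := by
    intro q hq
    rw [hVL]
    exact ((hCSL q hq).const_mul α).add (((hRLdA q hq).hasDerivAt).const_mul (1-α))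
  have hVHder : ∀ q ∈ I, HasDerivAt VH (α * -(DH q) + (1-α) * deriv RH q) q := by
    intro q hq
    rw [hVH]
    exact ((hCSH q hq).const_mul α).add (((hRHdA q hq).hasDerivAt).const_mul (1-α))
  have hgLc : ContinuousOn (fun q => α * -(DL q) + (1-α) * deriv RL q) I :=
    (continuousOn_const.mul hDL.continuousOn.neg).add
      (continuousOn_const.mul hRL1.continuousOn)
  have hgHc : ContinuousOn (fun q => α * -(DH q) + (1-α) * deriv RH q) I :=
    (continuousOn_const.mul hDH.continuousOn.neg).add
      (continuousOn_const.mul hRH1.continuousOn)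
  have hgLd : DifferentiableOn ℝ (fun q => α * -(DL q) + (1-α) * deriv RL q) I :=
    (((hDL.differentiableOn (by norm_num)).neg).const_mul α).add
      ((hRL1.differentiableOn (by norm_num)).const_mul (1-α))
  have hgHd : DifferentiableOn ℝ (fun q => α * -(DH q) + (1-α) * deriv RH q) I :=
    (((hDH.differentiableOn (by norm_num)).neg).const_mul α).add
      ((hRH1.differentiableOn (by norm_num)).const_mul (1-α))
  -- monotonicity of p
  have hanti2 : ∀ c1 c2 : ℝ, 0 ≤ c1 → 0 ≤ c2 → c1 + c2 = 1 →
      StrictAntiOn (fun q => c1 * deriv RL q + c2 * deriv RH q) (Set.Icc pLs pHs) := by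
    intro c1 c2 hc1 hc2 hc12
    apply strictAntiOn_of_deriv_neg (convex_Icc _ _)
    · exact ((continuousOn_const.mul (hRL1.continuousOn.mono Isub)).add
        (continuousOn_const.mul (hRH1.continuousOn.mono Isub)))
    · intro q hq
      rw [interior_Icc] at hq
      have hqI : q ∈ I := Isub (Set.Ioo_subset_Icc_self hq)
      have hd : HasDerivAt (fun q => c1 * deriv RL q + c2 * deriv RH q)
          (c1 * deriv (deriv RL) q + c2 * deriv (deriv RH) q) q :=
        (((hRL1dA q hqI).hasDerivAt).const_mul c1).add
          (((hRH1dA q hqI).hasDerivAt).const_mul c2)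
      rw [hd.deriv]
      have h1 : c1 = 1 - c2 := by linarith
      have := convcomb_pos_stmt5 hc2 (by linarith) (neg_pos.2 (hRL'' q hqI))
        (neg_pos.2 (hRH'' q hqI))
      rw [h1]; linarith
  have hpmono : ∀ x ∈ Set.Icc (0:ℝ) 1, ∀ y ∈ Set.Icc (0:ℝ) 1, x ≤ y → p x ≤ p y := by
    intro x hx y hy hxy
    by_contra hcon
    push_neg at hcon
    have hmx := hp x hx
    have hmy := hp y hy
    have hpLmem : pLs ∈ Set.Icc pLs pHs := ⟨le_rfl, hlt.le⟩
    have hpHmem : pHs ∈ Set.Icc pLs pHs := ⟨hlt.le, le_rfl⟩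
    -- deriv RL (p x) ≤ 0
    have hφ : deriv RL (p x) ≤ 0 := by
      rcases eq_or_lt_of_le hmx.1.1 with h | h
      · rw [← h, hRL']
      · have := (hanti2 1 0 zero_le_one le_rfl (by norm_num)) hpLmem hmx.1 h
        simp only [one_mul, zero_mul, add_zero] at this
        rw [hRL'] at this
        linarith
    -- 0 ≤ deriv RH (p x)
    have hψ : 0 ≤ deriv RH (p x) := by
      rcases eq_or_lt_of_le hmx.1.2 with h | h
      · rw [h, hRH']
      · have := (hanti2 0 1 le_rfl zero_le_one (by norm_num)) hmx.1 hpHmem h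
        simp only [one_mul, zero_mul, zero_add] at this
        rw [hRH'] at this
        linarith
    have hFpx : 0 ≤ (1-y) * deriv RL (p x) + y * deriv RH (p x) := by
      nlinarith [hmx.2, mul_nonneg (sub_nonneg.2 hxy)
        (sub_nonneg.2 (hφ.trans hψ))]
    have hstrict := (hanti2 (1-y) y (by linarith [hy.2]) hy.1 (by ring)) hmy.1 hmx.1 hcon
    simp only at hstrict
    rw [hmy.2] at hstrict
    linarith
  -- the bracket (1-μ) VL' + μ VH' at p μ is negative
  have hbracket : ∀ μ ∈ Set.Icc (0:ℝ) 1,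
      (1-μ) * deriv VL (p μ) + μ * deriv VH (p μ) < 0 := by
    intro μ hμ
    have hqI : p μ ∈ I := Isub (hp μ hμ).1
    rw [(hVLder _ hqI).deriv, (hVHder _ hqI).deriv]
    have hpos := convcomb_pos_stmt5 hμ.1 hμ.2 (hDLpos _ hqI) (hDHpos _ hqI)
    nlinarith [(hp μ hμ).2, mul_pos hα0 hpos]
  have hmemIcc : ∀ x ∈ Set.Icc (0:ℝ) 1, ∀ y ∈ Set.Icc (0:ℝ) 1, ∀ a b : ℝ,
      0 ≤ a → 0 ≤ b → a + b = 1 → a*x+b*y ∈ Set.Icc (0:ℝ) 1 := by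
    intro x hx y hy a b ha hb hab
    constructor
    · nlinarith [hx.1, hy.1]
    · nlinarith [hx.2, hy.2]
  constructor
  · -- concave case
    intro hpconv hcond
    have htPL := tangent_package_stmt5 hIopen Isub hVLder hgLc hgLd
      (fun q hq => (hcond q hq).1)
    have htPH := tangent_package_stmt5 hIopen Isub hVHder hgHc hgHd
      (fun q hq => (hcond q hq).2.1)
    have hLH : ∀ q ∈ Set.Icc pLs pHs, deriv VH q ≤ deriv VL q := by
      intro q hq
      have hcl : q ∈ closure (Set.Ioo pLs pHs) := by rw [closure_Ioo hlt.ne]; exact hq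
      exact le_on_closure (fun t ht => (hcond t ht).2.2)
        (by rw [closure_Ioo hlt.ne]; exact htPH.2)
        (by rw [closure_Ioo hlt.ne]; exact htPL.2) hcl
    rw [hW]
    refine concave_aux_stmt5 (fun μ hμ => (hp μ hμ).1) htPL.1 htPH.1 ?_ ?_
    · intro x hx y hy a b ha hb hab
      have hμ := hmemIcc x hx y hy a b ha hb hab
      have hAge : 0 ≤ a * p x + b * p y - p (a*x+b*y) := by
        have := hpconv.2 hx hy ha hb hab
        simp only [smul_eq_mul] at this
        linarith
      exact mul_nonpos_of_nonpos_of_nonneg (hbracket _ hμ).le hAge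
    · intro μ hμ x hx y hy
      have hprod : 0 ≤ (x - y) * (p x - p y) := by
        rcases le_total x y with h | h
        · have := hpmono x hx y hy h
          nlinarith
        · have := hpmono y hy x hx h
          nlinarith
      exact mul_nonpos_of_nonneg_of_nonpos hprod
        (sub_nonpos.2 (hLH _ (hp μ hμ).1))
  · -- convex case
    intro hpconc hcond
    have hnegL : (deriv fun q => -VL q) = fun q => -deriv VL q := deriv.neg'
    have hnegH : (deriv fun q => -VH q) = fun q => -deriv VH q := deriv.neg'
    have htPL := tangent_package_stmt5 (V := fun q => -VL q)
      (g := fun q => -(α * -(DL q) + (1-α) * deriv RL q)) hIopen Isub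
      (fun q hq => (hVLder q hq).neg) hgLc.neg hgLd.neg
      (fun q hq => by
        rw [hnegL, show (fun q => -deriv VL q) = -(deriv VL) from rfl, deriv.neg]
        linarith [(hcond q hq).1])
    have htPH := tangent_package_stmt5 (V := fun q => -VH q)
      (g := fun q => -(α * -(DH q) + (1-α) * deriv RH q)) hIopen Isub
      (fun q hq => (hVHder q hq).neg) hgHc.neg hgHd.neg
      (fun q hq => by
        rw [hnegH, show (fun q => -deriv VH q) = -(deriv VH) from rfl, deriv.neg]
        linarith [(hcond q hq).2.1])
    have hLH : ∀ q ∈ Set.Icc pLs pHs, deriv VL q ≤ deriv VH q := by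
      intro q hq
      have hcl : q ∈ closure (Set.Ioo pLs pHs) := by rw [closure_Ioo hlt.ne]; exact hq
      have := le_on_closure (fun t ht => (hcond t ht).2.2)
        (by rw [closure_Ioo hlt.ne, show deriv VL = fun q => -(deriv (fun q => -VL q)) q by
              funext q; rw [hnegL]; ring]
            exact (htPL.2.neg : _))
        (by rw [closure_Ioo hlt.ne, show deriv VH = fun q => -(deriv (fun q => -VH q)) q by
              funext q; rw [hnegH]; ring]
            exact (htPH.2.neg : _)) hcl
      exact this
    have hconc : ConcaveOn ℝ (Set.Icc (0:ℝ) 1)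
        (fun μ => (1-μ) * (-VL (p μ)) + μ * (-VH (p μ))) := by
      refine concave_aux_stmt5 (VL := fun q => -VL q) (VH := fun q => -VH q)
        (fun μ hμ => (hp μ hμ).1) htPL.1 htPH.1 ?_ ?_
      · intro x hx y hy a b ha hb hab
        have hμ := hmemIcc x hx y hy a b ha hb hab
        have hAle : a * p x + b * p y - p (a*x+b*y) ≤ 0 := by
          have := hpconc.2 hx hy ha hb hab
          simp only [smul_eq_mul] at this
          linarith
        have hbr : 0 ≤ (1 - (a*x+b*y)) * deriv (fun q => -VL q) (p (a*x+b*y))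
            + (a*x+b*y) * deriv (fun q => -VH q) (p (a*x+b*y)) := by
          rw [hnegL, hnegH]
          have := hbracket _ hμ
          simp only
          nlinarith [this]
        exact mul_nonpos_of_nonneg_of_nonpos hbr hAle
      · intro μ hμ x hx y hy
        have hprod : 0 ≤ (x - y) * (p x - p y) := by
          rcases le_total x y with h | h
          · have := hpmono x hx y hy h
            nlinarith
          · have := hpmono y hy x hx h
            nlinarith
        have hd : deriv (fun q => -VH q) (p μ) - deriv (fun q => -VL q) (p μ)
            = -(deriv VH (p μ) - deriv VL (p μ)) := by
          rw [hnegL, hnegH]; ring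
        rw [hd]
        exact mul_nonpos_of_nonneg_of_nonpos hprod
          (by linarith [hLH _ (hp μ hμ).1])
    have hWneg : W = fun μ => -((1-μ) * (-VL (p μ)) + μ * (-VH (p μ))) := by
      rw [hW]; funext μ; ring
    rw [hWneg]
    exact hconc.neg
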